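/- arXiv:2512.02071 — 2 statements merged into one kernel-verified Lean document; each statement's English description precedes it below -/
import Mathlib

section
/- The third characteristic field of the liquid–gas model is genuinely nonlinear: with λ₃(m,n,u) = u + √(kγ(m+n)^{γ−1}) and eigenvector r₃ = (m, n, √(kγ(m+n)^{γ−1})), one has ∇λ₃ · r₃ = ((γ+1)/2)·√(kγ(m+n)^{γ−1}) > 0 for all m, n > 0. -/
open Real

/-- Genuine nonlinearity of the third field: with
`λ₃(m,n,u) = u + √(kγ(m+n)^{γ−1})` and `r₃ = (m, n, √(kγ(m+n)^{γ−1}))`,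
one has `∇λ₃ · r₃ = ((γ+1)/2)·√(kγ(m+n)^{γ−1}) > 0` for `m, n > 0`. -/
theorem third_field_genuinely_nonlinear (k γ : ℝ) (hk : 0 < k) (hγ : 1 < γ)
    (lam₃ : ℝ × ℝ × ℝ → ℝ)
    (hlam : ∀ w : ℝ × ℝ × ℝ,
      lam₃ w = w.2.2 + Real.sqrt (k * γ * (w.1 + w.2.1) ^ (γ - 1))) :
    ∀ m n u : ℝ, 0 < m → 0 < n →
      fderiv ℝ lam₃ (m, n, u)
          (m, n, Real.sqrt (k * γ * (m + n) ^ (γ - 1)))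
        = ((γ + 1) / 2) * Real.sqrt (k * γ * (m + n) ^ (γ - 1)) ∧
      0 < ((γ + 1) / 2) * Real.sqrt (k * γ * (m + n) ^ (γ - 1)) := by
  intro m n u hm hn
  have hkγ : (0:ℝ) < k * γ := mul_pos hk (lt_trans one_pos hγ)
  have ht0 : (0:ℝ) < m + n := add_pos hm hn
  set a : ℝ := Real.sqrt (k * γ) with ha
  set q : ℝ := (γ - 1) / 2 with hq
  set p : ℝ × ℝ × ℝ := (m, n, u) with hp
  set c : ℝ := Real.sqrt (k * γ * (m + n) ^ (γ - 1)) with hc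
  -- c = a * (m+n)^q, and similar pointwise identity near p
  have key : ∀ t : ℝ, 0 < t →
      Real.sqrt (k * γ * t ^ (γ - 1)) = a * t ^ q := by
    intro t ht
    have h1 : Real.sqrt (t ^ (γ - 1)) = t ^ q := by
      rw [Real.sqrt_eq_rpow, ← Real.rpow_mul ht.le]
      norm_num [hq, div_eq_mul_inv]
    rw [Real.sqrt_mul hkγ.le, h1]
  have hc' : c = a * (m + n) ^ q := key _ ht0
  have hcpos : 0 < c := Real.sqrt_pos.mpr (mul_pos hkγ (Real.rpow_pos_of_pos ht0 _))
  -- linear maps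
  set S : ℝ × ℝ × ℝ →L[ℝ] ℝ :=
    (ContinuousLinearMap.fst ℝ ℝ (ℝ × ℝ)) +
      (ContinuousLinearMap.fst ℝ ℝ ℝ).comp (ContinuousLinearMap.snd ℝ ℝ (ℝ × ℝ)) with hS
  set T : ℝ × ℝ × ℝ →L[ℝ] ℝ :=
    (ContinuousLinearMap.snd ℝ ℝ ℝ).comp (ContinuousLinearMap.snd ℝ ℝ (ℝ × ℝ)) with hT
  have hSder : HasFDerivAt (fun w : ℝ × ℝ × ℝ => w.1 + w.2.1) S p := by
    have := S.hasFDerivAt (x := p)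
    convert this using 1
    funext w; simp [hS]
  have hTder : HasFDerivAt (fun w : ℝ × ℝ × ℝ => w.2.2) T p := by
    have := T.hasFDerivAt (x := p)
    convert this using 1
    funext w; simp [hT]
  have hφ : HasDerivAt (fun t : ℝ => a * t ^ q) (a * (q * (m + n) ^ (q - 1))) (m + n) :=
    ((Real.hasStrictDerivAt_rpow_const_of_ne (ne_of_gt ht0) q).hasDerivAt).const_mul a
  have hcomp : HasFDerivAt (fun w : ℝ × ℝ × ℝ => a * (w.1 + w.2.1) ^ q)
      ((a * (q * (m + n) ^ (q - 1))) • S) p := by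
    have := hφ.comp_hasFDerivAt p hSder
    exact this
  have hg : HasFDerivAt (fun w : ℝ × ℝ × ℝ => w.2.2 + a * (w.1 + w.2.1) ^ q)
      (T + (a * (q * (m + n) ^ (q - 1))) • S) p := hTder.add hcomp
  -- lam₃ agrees with g near p
  have heq : lam₃ =ᶠ[nhds p] (fun w : ℝ × ℝ × ℝ => w.2.2 + a * (w.1 + w.2.1) ^ q) := by
    have hopen : IsOpen {w : ℝ × ℝ × ℝ | 0 < w.1 + w.2.1} := by
      have : Continuous fun w : ℝ × ℝ × ℝ => w.1 + w.2.1 :=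
        (continuous_fst.add (continuous_fst.comp continuous_snd))
      exact isOpen_lt continuous_const this
    have hmem : {w : ℝ × ℝ × ℝ | 0 < w.1 + w.2.1} ∈ nhds p :=
      hopen.mem_nhds (by simpa [hp] using ht0)
    filter_upwards [hmem] with w hw
    rw [hlam w, key _ hw]
  have hfd : fderiv ℝ lam₃ p = T + (a * (q * (m + n) ^ (q - 1))) • S := by
    rw [heq.fderiv_eq, hg.fderiv]
  constructor
  · show fderiv ℝ lam₃ p (m, n, c) = ((γ + 1) / 2) * c
    rw [hfd]
    have hSv : S (m, n, c) = m + n := by simp [hS]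
    have hTv : T (m, n, c) = c := by simp [hT]
    have hstep : (m + n) ^ (q - 1) * (m + n) = (m + n) ^ q := by
      nth_rewrite 2 [← Real.rpow_one (m + n)]
      rw [← Real.rpow_add ht0]
      ring_nf
    have : (T + (a * (q * (m + n) ^ (q - 1))) • S) (m, n, c)
        = c + a * (q * (m + n) ^ (q - 1)) * (m + n) := by
      simp [hSv, hTv]
    rw [this]
    have : a * (q * (m + n) ^ (q - 1)) * (m + n) = q * (a * (m + n) ^ q) := by
      rw [← hstep]; ring
    rw [this, ← hc', hq]
    ring
  · exact mul_pos (by linarith) hcpos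
end

section
/- The first characteristic field of the liquid–gas model is genuinely nonlinear: with λ₁(m,n,u) = u − √(kγ(m+n)^{γ−1}) and eigenvector r₁ = (m, n, −√(kγ(m+n)^{γ−1})), one has ∇λ₁ · r₁ = −((γ+1)/2)·√(kγ(m+n)^{γ−1}) < 0 for all m, n > 0. -/
open Real

theorem aux_hasfderiv (k γ : ℝ) (hk : 0 < k) (hγ : 1 < γ)
    (m n u : ℝ) (hm : 0 < m) (hn : 0 < n) :
    HasFDerivAt (fun w : ℝ × ℝ × ℝ =>
        w.2.2 - Real.sqrt (k * γ * (w.1 + w.2.1) ^ (γ - 1))) (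
      ((ContinuousLinearMap.snd ℝ ℝ ℝ).comp (ContinuousLinearMap.snd ℝ ℝ (ℝ × ℝ)))
      - (Real.sqrt (k * γ) * ((γ - 1) / 2) * (m + n) ^ ((γ - 1) / 2 - 1)) •
        ((ContinuousLinearMap.fst ℝ ℝ (ℝ × ℝ))
          + (ContinuousLinearMap.fst ℝ ℝ ℝ).comp (ContinuousLinearMap.snd ℝ ℝ (ℝ × ℝ)))
    ) (m, n, u) := by
  have hs : 0 < m + n := by linarith
  have hkγ : 0 < k * γ := by positivity
  -- the scalar function h x = sqrt (kγ x^(γ-1)) and its derivative at m+n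
  set p : ℝ := (γ - 1) / 2 with hp
  have hd : HasDerivAt (fun x : ℝ => Real.sqrt (k * γ * x ^ (γ - 1)))
      (Real.sqrt (k * γ) * p * (m + n) ^ (p - 1)) (m + n) := by
    have h1 : HasDerivAt (fun x : ℝ => Real.sqrt (k * γ) * x ^ p)
        (Real.sqrt (k * γ) * (p * (m + n) ^ (p - 1))) (m + n) :=
      (Real.hasDerivAt_rpow_const (Or.inl hs.ne')).const_mul _
    have heq : (fun x : ℝ => Real.sqrt (k * γ) * x ^ p)
        =ᶠ[nhds (m + n)] (fun x : ℝ => Real.sqrt (k * γ * x ^ (γ - 1))) := by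
      filter_upwards [eventually_gt_nhds hs] with x hx
      rw [Real.sqrt_mul hkγ.le, Real.sqrt_eq_rpow (x ^ (γ - 1)),
        ← Real.rpow_mul hx.le]
      congr 1
      rw [hp]; ring
    have := h1.congr_of_eventuallyEq heq.symm
    refine this.congr_deriv ?_
    ring
  set σ : (ℝ × ℝ × ℝ) →L[ℝ] ℝ := (ContinuousLinearMap.fst ℝ ℝ (ℝ × ℝ))
      + (ContinuousLinearMap.fst ℝ ℝ ℝ).comp (ContinuousLinearMap.snd ℝ ℝ (ℝ × ℝ)) with hσ
  have hσd : HasFDerivAt (fun w : ℝ × ℝ × ℝ => w.1 + w.2.1) σ (m, n, u) :=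
    σ.hasFDerivAt
  have hcomp := hd.comp_hasFDerivAt (m, n, u) hσd
  set π₃ : (ℝ × ℝ × ℝ) →L[ℝ] ℝ :=
    (ContinuousLinearMap.snd ℝ ℝ ℝ).comp (ContinuousLinearMap.snd ℝ ℝ (ℝ × ℝ)) with hπ
  have hπd : HasFDerivAt (fun w : ℝ × ℝ × ℝ => w.2.2) π₃ (m, n, u) := π₃.hasFDerivAt
  exact hπd.sub hcomp

/-- Genuine nonlinearity of the first field: with
`λ₁(m,n,u) = u − √(kγ(m+n)^{γ−1})` and `r₁ = (m, n, −√(kγ(m+n)^{γ−1}))`,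
one has `∇λ₁ · r₁ = −((γ+1)/2)·√(kγ(m+n)^{γ−1}) < 0` for `m, n > 0`. -/
theorem first_field_genuinely_nonlinear (k γ : ℝ) (hk : 0 < k) (hγ : 1 < γ)
    (lam₁ : ℝ × ℝ × ℝ → ℝ)
    (hlam : ∀ w : ℝ × ℝ × ℝ,
      lam₁ w = w.2.2 - Real.sqrt (k * γ * (w.1 + w.2.1) ^ (γ - 1))) :
    ∀ m n u : ℝ, 0 < m → 0 < n →
      fderiv ℝ lam₁ (m, n, u)
          (m, n, -Real.sqrt (k * γ * (m + n) ^ (γ - 1)))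
        = -(((γ + 1) / 2) * Real.sqrt (k * γ * (m + n) ^ (γ - 1))) ∧
      -(((γ + 1) / 2) * Real.sqrt (k * γ * (m + n) ^ (γ - 1))) < 0 := by
  intro m n u hm hn
  have hs : 0 < m + n := by linarith
  have hkγ : 0 < k * γ := by positivity
  have hlam' : lam₁ = fun w : ℝ × ℝ × ℝ =>
      w.2.2 - Real.sqrt (k * γ * (w.1 + w.2.1) ^ (γ - 1)) := funext hlam
  have hF := aux_hasfderiv k γ hk hγ m n u hm hn
  rw [← hlam'] at hF
  have hfd := hF.fderiv
  set c : ℝ := Real.sqrt (k * γ * (m + n) ^ (γ - 1)) with hc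
  have hcpos : 0 < c := Real.sqrt_pos.mpr (by positivity)
  constructor
  · rw [hfd]
    simp only [ContinuousLinearMap.sub_apply, ContinuousLinearMap.smul_apply,
      ContinuousLinearMap.add_apply, ContinuousLinearMap.comp_apply,
      ContinuousLinearMap.coe_fst', ContinuousLinearMap.coe_snd', smul_eq_mul]
    -- goal: -c - D * (m+n) = -((γ+1)/2 * c)
    have hcval : c = Real.sqrt (k * γ) * (m + n) ^ ((γ - 1) / 2) := by
      rw [hc, Real.sqrt_mul hkγ.le, Real.sqrt_eq_rpow ((m + n) ^ (γ - 1)),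
        ← Real.rpow_mul hs.le]
      congr 1
      ring
    have hpow : (m + n) ^ ((γ - 1) / 2 - 1) * (m + n) = (m + n) ^ ((γ - 1) / 2) := by
      rw [Real.rpow_sub hs, Real.rpow_one]
      field_simp
    calc -c - Real.sqrt (k * γ) * ((γ - 1) / 2) * (m + n) ^ ((γ - 1) / 2 - 1) * (m + n)
        = -c - ((γ - 1) / 2) * (Real.sqrt (k * γ) * ((m + n) ^ ((γ - 1) / 2 - 1) * (m + n))) := by
          ring
      _ = -c - ((γ - 1) / 2) * c := by rw [hpow, ← hcval]
      _ = -(((γ + 1) / 2) * c) := by ring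
  · nlinarith [hcpos]
end
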